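/- Let p be a prime and let x₁, x₂, x₃ ∈ pℤ_p. Define F : ℤ_p³ → ℤ_p³ by F(x₁,x₂,x₃) = (x₁ + 2x₂x₃ + 2x₁x₂x₃, −x₃(1+x₁), x₂(1+x₁)(1+2x₃)). Then the Jacobian determinant of F at (x₁,x₂,x₃) (the determinant of the matrix of formal partial derivatives) is a unit in ℤ_p. -/

import Mathlib

/-- The Jacobian determinant of F(x₁,x₂,x₃) = (x₁+2x₂x₃+2x₁x₂x₃, −x₃(1+x₁),
x₂(1+x₁)(1+2x₃)) at a point of (pℤ_p)³ is a unit of ℤ_p. -/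
theorem stmt_10 (p : ℕ) [Fact p.Prime] (x₁ x₂ x₃ : ℤ_[p])
    (h₁ : x₁ ∈ Ideal.span {(p : ℤ_[p])}) (h₂ : x₂ ∈ Ideal.span {(p : ℤ_[p])})
    (h₃ : x₃ ∈ Ideal.span {(p : ℤ_[p])}) :
    IsUnit (Matrix.det
      !![1 + 2 * x₂ * x₃, 2 * x₃ + 2 * x₁ * x₃, 2 * x₂ + 2 * x₁ * x₂;
         -x₃, 0, -(1 + x₁);
         x₂ * (1 + 2 * x₃), (1 + x₁) * (1 + 2 * x₃), 2 * x₂ * (1 + x₁)]) := by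
  rw [Ideal.mem_span_singleton] at h₁ h₂ h₃
  obtain ⟨a, ha⟩ := h₁; obtain ⟨b, hb⟩ := h₂; obtain ⟨c, hc⟩ := h₃
  by_contra h
  have hm : (Matrix.det
      !![1 + 2 * x₂ * x₃, 2 * x₃ + 2 * x₁ * x₃, 2 * x₂ + 2 * x₁ * x₂;
         -x₃, 0, -(1 + x₁);
         x₂ * (1 + 2 * x₃), (1 + x₁) * (1 + 2 * x₃), 2 * x₂ * (1 + x₁)])
      ∈ IsLocalRing.maximalIdeal ℤ_[p] := h
  rw [PadicInt.maximalIdeal_eq_span_p, Ideal.mem_span_singleton] at hm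
  obtain ⟨d, hd⟩ := hm
  simp [Matrix.det_fin_three] at hd
  have h1 : (1 : ℤ_[p]) = (p : ℤ_[p]) * (d - ((2 : ℤ_[p])*c + (2 : ℤ_[p])*a + (-2 : ℤ_[p])*(p:ℤ_[p])*b*c + (4 : ℤ_[p])*(p:ℤ_[p])*a*c + (p:ℤ_[p])*a*a + (-4 : ℤ_[p])*(p:ℤ_[p])*(p:ℤ_[p])*a*b*c + (2 : ℤ_[p])*(p:ℤ_[p])*(p:ℤ_[p])*a*a*c + (-2 : ℤ_[p])*(p:ℤ_[p])*(p:ℤ_[p])*(p:ℤ_[p])*a*a*b*c)) := by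
    rw [ha, hb, hc] at hd
    linear_combination hd
  have : IsUnit (p : ℤ_[p]) := IsUnit.of_mul_eq_one _ h1.symm
  exact mem_nonunits_iff.mp PadicInt.p_nonunit this
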